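/- Let n and p be positive integers. Every shuffle-preserved 2-local coloring of every complete bipartite multigraph on two parts of size n contains a monochromatic copy of K_{p,p} if and only if 2(p−1) < n. -/
import Mathlib


/-- Tightness for m = 2: every shuffle-preserved 2-local coloring of every
complete n×n bipartite multigraph has a monochromatic K_{p,p} iff 2(p-1) < n. -/
theorem ramsey_two_local_iff (n p : ℕ) (hn : 0 < n) (hp : 0 < p) :
    (∀ (U V C : Type) [Fintype U] [Fintype V],
      Fintype.card U = n → Fintype.card V = n →
      ∀ η : U → V → Set C,
        (∀ u v, (η u v).Nonempty) →
        (∀ u u' v v' c, c ∈ η u v → c ∈ η u' v' →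
          c ∈ η u v' ∧ c ∈ η u' v) →
        (∀ u : U, ∃ s : Finset C, s.card ≤ 2 ∧ ∀ c v, c ∈ η u v → c ∈ s) →
        (∀ v : V, ∃ s : Finset C, s.card ≤ 2 ∧ ∀ c u, c ∈ η u v → c ∈ s) →
        ∃ (c : C) (A : Finset U) (B : Finset V), A.card = p ∧ B.card = p ∧
          ∀ u ∈ A, ∀ v ∈ B, c ∈ η u v)
    ↔ 2 * (p - 1) < n := by
  classical
  constructor
  · -- if every coloring has a monochromatic K_{p,p}, then 2(p-1) < n
    intro H
    by_contra hlt
    push_neg at hlt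
    obtain ⟨c, A, B, hA, hB, hmem⟩ := H (Fin n) (Fin n) ℕ (by simp) (by simp)
      (fun u _ => {u.val % 2})
      (fun u _ => ⟨u.val % 2, rfl⟩)
      (fun u u' v v' c h1 h2 => ⟨h1, h2⟩)
      (fun u => ⟨{u.val % 2}, by simp, fun c v hc => by simpa using hc⟩)
      (fun v => ⟨{0, 1}, by simp, fun c u hc => by
        simp only [Set.mem_singleton_iff] at hc
        simp only [Finset.mem_insert, Finset.mem_singleton]
        omega⟩)
    obtain ⟨v, hv⟩ := Finset.card_pos.mp (by omega : 0 < B.card)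
    have hmaps : ∀ u ∈ A, (u : Fin n).val / 2 ∈ Finset.range (p - 1) := by
      intro u _
      have := u.isLt
      simp only [Finset.mem_range]
      omega
    have hinj : Set.InjOn (fun u : Fin n => u.val / 2) A := by
      intro x hx y hy hxy
      have hxc : c = x.val % 2 := hmem x hx v hv
      have hyc : c = y.val % 2 := hmem y hy v hv
      simp only at hxy
      exact Fin.ext (by omega)
    have := Finset.card_le_card_of_injOn _ hmaps hinj
    rw [hA, Finset.card_range] at this
    omega
  · -- if 2(p-1) < n, every coloring has a monochromatic K_{p,p}
    intro hn2 U V C _ _ hU hV η hne hshuf hlocU hlocV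
    set Uf : C → Finset U := fun c => Finset.univ.filter (fun u => ∃ v, c ∈ η u v)
      with hUf
    set Vf : C → Finset V := fun c => Finset.univ.filter (fun v => ∃ u, c ∈ η u v)
      with hVf
    have hcomplete : ∀ c u v, u ∈ Uf c → v ∈ Vf c → c ∈ η u v := by
      intro c u v hu hv
      simp only [hUf, Finset.mem_filter] at hu
      simp only [hVf, Finset.mem_filter] at hv
      obtain ⟨v0, hv0⟩ := hu.2
      obtain ⟨u0, hu0⟩ := hv.2
      exact (hshuf u u0 v0 v c hv0 hu0).1
    -- every u sees a color whose V-class is big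
    have everyU : ∀ u : U, ∃ c, u ∈ Uf c ∧ p ≤ (Vf c).card := by
      intro u
      obtain ⟨s, hs2, hs⟩ := hlocU u
      set s' := s.filter (fun c => ∃ v, c ∈ η u v) with hs'
      have hcover : (Finset.univ : Finset V) ⊆ s'.biUnion Vf := by
        intro v _
        obtain ⟨c, hc⟩ := hne u v
        refine Finset.mem_biUnion.mpr ⟨c, ?_, ?_⟩
        · exact Finset.mem_filter.mpr ⟨hs c v hc, v, hc⟩
        · exact Finset.mem_filter.mpr ⟨Finset.mem_univ _, u, hc⟩
      by_contra hno
      push_neg at hno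
      have hsum : n ≤ ∑ c ∈ s', (Vf c).card := by
        calc n = Fintype.card V := hV.symm
        _ = (Finset.univ : Finset V).card := by rw [Finset.card_univ]
        _ ≤ (s'.biUnion Vf).card := Finset.card_le_card hcover
        _ ≤ ∑ c ∈ s', (Vf c).card := Finset.card_biUnion_le
      have hbound : ∀ c ∈ s', (Vf c).card ≤ p - 1 := by
        intro c hc
        have hu : u ∈ Uf c :=
          Finset.mem_filter.mpr ⟨Finset.mem_univ _, (Finset.mem_filter.mp hc).2⟩
        have := hno c hu
        omega
      have h1 : ∑ c ∈ s', (Vf c).card ≤ s'.card * (p - 1) := by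
        simpa [smul_eq_mul] using Finset.sum_le_card_nsmul s' _ (p - 1) hbound
      have hcard : s'.card ≤ 2 := le_trans (Finset.card_filter_le _ _) hs2
      have h2 : s'.card * (p - 1) ≤ 2 * (p - 1) := Nat.mul_le_mul_right _ hcard
      omega
    -- every v sees a color whose U-class is big
    have everyV : ∀ v : V, ∃ c, v ∈ Vf c ∧ p ≤ (Uf c).card := by
      intro v
      obtain ⟨s, hs2, hs⟩ := hlocV v
      set s' := s.filter (fun c => ∃ u, c ∈ η u v) with hs'
      have hcover : (Finset.univ : Finset U) ⊆ s'.biUnion Uf := by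
        intro u _
        obtain ⟨c, hc⟩ := hne u v
        refine Finset.mem_biUnion.mpr ⟨c, ?_, ?_⟩
        · exact Finset.mem_filter.mpr ⟨hs c u hc, u, hc⟩
        · exact Finset.mem_filter.mpr ⟨Finset.mem_univ _, v, hc⟩
      by_contra hno
      push_neg at hno
      have hsum : n ≤ ∑ c ∈ s', (Uf c).card := by
        calc n = Fintype.card U := hU.symm
        _ = (Finset.univ : Finset U).card := by rw [Finset.card_univ]
        _ ≤ (s'.biUnion Uf).card := Finset.card_le_card hcover
        _ ≤ ∑ c ∈ s', (Uf c).card := Finset.card_biUnion_le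
      have hbound : ∀ c ∈ s', (Uf c).card ≤ p - 1 := by
        intro c hc
        have hv : v ∈ Vf c :=
          Finset.mem_filter.mpr ⟨Finset.mem_univ _, (Finset.mem_filter.mp hc).2⟩
        have := hno c hv
        omega
      have h1 : ∑ c ∈ s', (Uf c).card ≤ s'.card * (p - 1) := by
        simpa [smul_eq_mul] using Finset.sum_le_card_nsmul s' _ (p - 1) hbound
      have hcard : s'.card ≤ 2 := le_trans (Finset.card_filter_le _ _) hs2
      have h2 : s'.card * (p - 1) ≤ 2 * (p - 1) := Nat.mul_le_mul_right _ hcard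
      omega
    by_cases hex : ∃ c, p ≤ (Uf c).card ∧ p ≤ (Vf c).card
    · obtain ⟨c, hcu, hcv⟩ := hex
      obtain ⟨A, hAsub, hAcard⟩ := Finset.exists_subset_card_eq hcu
      obtain ⟨B, hBsub, hBcard⟩ := Finset.exists_subset_card_eq hcv
      exact ⟨c, A, B, hAcard, hBcard,
        fun u hu v hv => hcomplete c u v (hAsub hu) (hBsub hv)⟩
    · exfalso
      push_neg at hex
      choose f hf1 hf2 using everyU
      set S : Finset C := Finset.univ.image f with hS
      have hbigS : ∀ c ∈ S, p ≤ (Vf c).card := by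
        intro c hc
        obtain ⟨u0, _, hu0⟩ := Finset.mem_image.mp hc
        exact hu0 ▸ hf2 u0
      -- upper bound: n ≤ (p-1) * S.card
      have hupper : n ≤ (p - 1) * S.card := by
        have hfib : ∀ b ∈ Finset.univ.image f,
            ((Finset.univ : Finset U).filter (fun a => f a = b)).card ≤ p - 1 := by
          intro b hb
          have hVb : p ≤ (Vf b).card := hbigS b hb
          have hUb : (Uf b).card < p := by
            by_contra h
            push_neg at h
            exact absurd hVb (by have := hex b h; omega)
          have hsub : (Finset.univ : Finset U).filter (fun a => f a = b) ⊆ Uf b := by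
            intro a ha
            have hab : f a = b := (Finset.mem_filter.mp ha).2
            exact hab ▸ hf1 a
          have := Finset.card_le_card hsub
          omega
        calc n = Fintype.card U := hU.symm
        _ = (Finset.univ : Finset U).card := by rw [Finset.card_univ]
        _ ≤ (p - 1) * S.card := Finset.card_le_mul_card_image Finset.univ (p - 1) hfib
      -- the V-classes of colors in S are pairwise disjoint
      have hdisj : ∀ c ∈ S, ∀ c' ∈ S, c ≠ c' → Disjoint (Vf c) (Vf c') := by
        intro c hc c' hc' hne'
        rw [Finset.disjoint_left]
        intro v hv hv'
        obtain ⟨d, hvd, hUd⟩ := everyV v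
        have hVd : (Vf d).card < p := hex d hUd
        have hdc : d ≠ c := fun h => absurd (hbigS c hc) (by rw [← h]; omega)
        have hdc' : d ≠ c' := fun h => absurd (hbigS c' hc') (by rw [← h]; omega)
        obtain ⟨s, hs2, hs⟩ := hlocV v
        have hcs : c ∈ s := by
          obtain ⟨u0, hu0⟩ := (Finset.mem_filter.mp hv).2
          exact hs c u0 hu0
        have hc's : c' ∈ s := by
          obtain ⟨u0, hu0⟩ := (Finset.mem_filter.mp hv').2
          exact hs c' u0 hu0
        have hds : d ∈ s := by
          obtain ⟨u0, hu0⟩ := (Finset.mem_filter.mp hvd).2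
          exact hs d u0 hu0
        have hsub3 : ({c, c', d} : Finset C) ⊆ s := by
          intro x hx
          simp only [Finset.mem_insert, Finset.mem_singleton] at hx
          rcases hx with rfl | rfl | rfl <;> assumption
        have h3 : ({c, c', d} : Finset C).card = 3 := by
          rw [Finset.card_insert_of_notMem (by simp [hne', Ne.symm hdc]),
            Finset.card_insert_of_notMem (by simp [Ne.symm hdc']),
            Finset.card_singleton]
        have := Finset.card_le_card hsub3
        omega
      -- lower bound: p * S.card ≤ n
      have hlower : S.card * p ≤ n := by
        calc S.card * p = S.card • p := by rw [smul_eq_mul]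
        _ ≤ ∑ c ∈ S, (Vf c).card := Finset.card_nsmul_le_sum S _ p hbigS
        _ = (S.biUnion Vf).card := (Finset.card_biUnion hdisj).symm
        _ ≤ (Finset.univ : Finset V).card := Finset.card_le_card (Finset.subset_univ _)
        _ = Fintype.card V := by rw [Finset.card_univ]
        _ = n := hV
      have hSpos : 0 < S.card := by
        have : Nonempty U := Fintype.card_pos_iff.mp (by omega)
        obtain ⟨u0⟩ := this
        exact Finset.card_pos.mpr ⟨f u0, Finset.mem_image.mpr ⟨u0, Finset.mem_univ _, rfl⟩⟩
      have hmul : (p - 1) * S.card < p * S.card :=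
        Nat.mul_lt_mul_of_lt_of_le (by omega) le_rfl hSpos
      have : S.card * p = p * S.card := Nat.mul_comm _ _
      exact Nat.lt_irrefl n (by calc n ≤ (p-1) * S.card := hupper
        _ < p * S.card := hmul
        _ = S.card * p := Nat.mul_comm _ _
        _ ≤ n := hlower)
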